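/- Let p ∈ ℕ, let Ω ∈ ℝ^{p×p} be symmetric positive definite, let β, x, δ ∈ ℝ^p and β₀ ∈ ℝ, let F(t) = 1/(1+e^{−t}), and let φ(v) = exp(−½ v'Ω⁻¹v). Then F(β₀ + x'β) · φ(δ − Ωβ − x) / [ F(β₀ + x'β) · φ(δ − Ωβ − x) + (1 − F(β₀ + x'β)) · φ(δ − x) ] = F( β₀ + δ'β − 0.5 β'Ωβ ). In particular, the left-hand side does not depend on x, which is the algebraic identity underlying the conditional-score sufficiency reduction P(Y = 1 | Δ = δ) = F(β̃₀ + (δ − 0.5Ωβ̃)'β̃) in the logistic measurement-error model. -/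

import Mathlib

open Matrix

/-- The logistic function `F(t) = 1/(1+e^{-t})`. -/
noncomputable def logistic (t : ℝ) : ℝ := 1 / (1 + Real.exp (-t))

lemma logistic_pos (a : ℝ) : 0 < logistic a := by
  unfold logistic; positivity

lemma logistic_lt_one (a : ℝ) : logistic a < 1 := by
  unfold logistic
  rw [div_lt_one (by positivity)]
  linarith [Real.exp_pos (-a)]

lemma logistic_ratio (a c : ℝ) :
    logistic a * Real.exp c / (logistic a * Real.exp c + (1 - logistic a)) =
      logistic (a + c) := by
  unfold logistic
  have h1 : (0:ℝ) < 1 + Real.exp (-a) := by positivity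
  have h2 : (0:ℝ) < 1 + Real.exp (-(a + c)) := by positivity
  have h3 : Real.exp (-(a+c)) * Real.exp c = Real.exp (-a) := by
    rw [← Real.exp_add]; ring_nf
  have hden : 1 / (1 + Real.exp (-a)) * Real.exp c +
      (1 - 1 / (1 + Real.exp (-a))) > 0 := by
    have := logistic_pos a
    have := logistic_lt_one a
    unfold logistic at *
    nlinarith [Real.exp_pos c]
  have h4 : Real.exp (-c + -a) = Real.exp (-c) * Real.exp (-a) := Real.exp_add _ _
  have h5 : Real.exp c * Real.exp (-c) = 1 := by rw [← Real.exp_add]; simp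
  field_simp
  rw [div_eq_one_iff_eq (ne_of_gt (by linarith [Real.exp_pos c, Real.exp_pos (-a)]))]
  linear_combination h3

/-- the algebraic identity underlying the conditional-score sufficiency
reduction `P(Y = 1 | Δ = δ) = F(β̃₀ + (δ − 0.5Ωβ̃)'β̃)` in the logistic measurement-error
model.  Here `φ(v) = exp(−½ v'Ω⁻¹v)` is the unnormalized `N(0, Ω)` density. -/
theorem stmt_9 (p : ℕ) (Ω : Matrix (Fin p) (Fin p) ℝ) (hΩ : Ω.PosDef)
    (β x δ : Fin p → ℝ) (β₀ : ℝ) :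
    logistic (β₀ + x ⬝ᵥ β) *
        Real.exp (-(1 / 2) * ((δ - Ω.mulVec β - x) ⬝ᵥ Ω⁻¹.mulVec (δ - Ω.mulVec β - x))) /
      (logistic (β₀ + x ⬝ᵥ β) *
          Real.exp (-(1 / 2) * ((δ - Ω.mulVec β - x) ⬝ᵥ Ω⁻¹.mulVec (δ - Ω.mulVec β - x))) +
        (1 - logistic (β₀ + x ⬝ᵥ β)) *
          Real.exp (-(1 / 2) * ((δ - x) ⬝ᵥ Ω⁻¹.mulVec (δ - x)))) =
      logistic (β₀ + δ ⬝ᵥ β - 0.5 * (β ⬝ᵥ Ω.mulVec β)) := by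
  have hdet : IsUnit Ω.det := (hΩ.det_pos).ne'.isUnit
  have hsym : Ωᵀ = Ω := hΩ.isHermitian.eq
  have hinv_sym : (Ω⁻¹)ᵀ = Ω⁻¹ := by rw [Matrix.transpose_nonsing_inv, hsym]
  set u : Fin p → ℝ := δ - x with hu
  set a : ℝ := β₀ + x ⬝ᵥ β with ha
  set c : ℝ := u ⬝ᵥ β - (1/2) * (β ⬝ᵥ Ω.mulVec β) with hc
  -- key: Ω⁻¹ (Ω β) = β
  have hinvmul : Ω⁻¹.mulVec (Ω.mulVec β) = β := by
    rw [Matrix.mulVec_mulVec, Matrix.nonsing_inv_mul Ω hdet, Matrix.one_mulVec]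
  -- symmetry of the quadratic form
  have hsymdot : ∀ v w : Fin p → ℝ, v ⬝ᵥ Ω⁻¹.mulVec w = w ⬝ᵥ Ω⁻¹.mulVec v := by
    intro v w
    rw [Matrix.dotProduct_mulVec, ← Matrix.mulVec_transpose, hinv_sym, dotProduct_comm]
  -- quadratic expansion
  have hquad : (u - Ω.mulVec β) ⬝ᵥ Ω⁻¹.mulVec (u - Ω.mulVec β) =
      u ⬝ᵥ Ω⁻¹.mulVec u - 2 * (u ⬝ᵥ β) + β ⬝ᵥ Ω.mulVec β := by
    rw [Matrix.mulVec_sub, sub_dotProduct, dotProduct_sub, dotProduct_sub,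
      hinvmul, hsymdot (Ω.mulVec β) u, hinvmul]
    have : Ω.mulVec β ⬝ᵥ β = β ⬝ᵥ Ω.mulVec β := dotProduct_comm _ _
    rw [this]; ring
  have hw : δ - Ω.mulVec β - x = u - Ω.mulVec β := by
    rw [hu]; abel
  have hexp : Real.exp (-(1 / 2) * ((δ - Ω.mulVec β - x) ⬝ᵥ
      Ω⁻¹.mulVec (δ - Ω.mulVec β - x))) =
      Real.exp c * Real.exp (-(1 / 2) * (u ⬝ᵥ Ω⁻¹.mulVec u)) := by
    rw [hw, hquad, ← Real.exp_add, hc]; ring_nf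
  have hE : Real.exp (-(1 / 2) * (u ⬝ᵥ Ω⁻¹.mulVec u)) > 0 := Real.exp_pos _
  rw [hexp]
  have key := logistic_ratio a c
  have hac : a + c = β₀ + δ ⬝ᵥ β - 0.5 * (β ⬝ᵥ Ω.mulVec β) := by
    rw [ha, hc, hu, sub_dotProduct]; ring
  rw [← hac, ← key]
  set E := Real.exp (-(1 / 2) * (u ⬝ᵥ Ω⁻¹.mulVec u))
  set L := logistic a
  have hden : L * Real.exp c + (1 - L) > 0 := by
    have h1 := logistic_pos a
    have h2 := logistic_lt_one a
    nlinarith [Real.exp_pos c]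
  rw [show L * (Real.exp c * E) + (1 - L) * E = (L * Real.exp c + (1 - L)) * E by ring,
    show L * (Real.exp c * E) = (L * Real.exp c) * E by ring,
    mul_div_mul_right _ _ (ne_of_gt hE)]
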